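/- Let R and S be rings and let φ : R → S be a surjective local ring homomorphism. Then φ(J(R)) = J(S), and for every n ≥ 1 the induced ring homomorphism Mₙ(φ) : Mₙ(R) → Mₙ(S) between the rings of n×n matrices (applying φ entrywise) is a local morphism. -/

import Mathlib

/-- If `φ : R → S` is a surjective local ring homomorphism, then
`φ(J(R)) = J(S)` and, for every `n ≥ 1`, the induced ring homomorphism
`Mₙ(φ) : Mₙ(R) → Mₙ(S)` (applying `φ` entrywise) is a local morphism. -/
private theorem aux_isUnit_of_sub_one_mem_jacobson_bot {R : Type*} [Ring R] (r : R)
    (h : r - 1 ∈ Ideal.jacobson (⊥ : Ideal R)) : IsUnit r := by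
  obtain ⟨s, hs⟩ := Ideal.exists_mul_sub_mem_of_sub_one_mem_jacobson r h
  rw [Ideal.mem_bot, sub_eq_zero] at hs
  have h1 : s - 1 ∈ Ideal.jacobson (⊥ : Ideal R) := by
    have h2 := Ideal.mul_mem_left _ s h
    have h3 : s * (r - 1) = -(s - 1) := by rw [mul_sub, hs, mul_one, neg_sub]
    rw [h3] at h2
    simpa using (Ideal.jacobson (⊥ : Ideal R)).neg_mem h2
  obtain ⟨t, ht⟩ := Ideal.exists_mul_sub_mem_of_sub_one_mem_jacobson s h1
  rw [Ideal.mem_bot, sub_eq_zero] at ht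
  have hrt : r = t := by
    calc r = (t * s) * r := by rw [ht, one_mul]
      _ = t * (s * r) := by rw [mul_assoc]
      _ = t := by rw [hs, mul_one]
  exact ⟨⟨r, s, by rw [hrt, ht], hs⟩, rfl⟩

theorem image_jacobson_eq_and_mapMatrix_local {R S : Type*} [Ring R] [Ring S]
    (φ : R →+* S) (hsurj : Function.Surjective φ)
    (hφ : ∀ r : R, IsUnit (φ r) → IsUnit r) :
    φ '' (Ideal.jacobson (⊥ : Ideal R) : Set R) = (Ideal.jacobson (⊥ : Ideal S) : Set S) ∧
    ∀ n : ℕ, 1 ≤ n → ∀ M : Matrix (Fin n) (Fin n) R,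
      IsUnit ((φ.mapMatrix : Matrix (Fin n) (Fin n) R →+* Matrix (Fin n) (Fin n) S) M) →
        IsUnit M := by
  -- ker φ ≤ J(R)
  have hker : RingHom.ker φ ≤ Ideal.jacobson (⊥ : Ideal R) := by
    intro x hx
    rw [Ideal.mem_jacobson_iff]
    intro y
    have hx0 : φ x = 0 := hx
    have hu : IsUnit (y * x + 1) := by
      apply hφ
      simp [hx0]
    obtain ⟨u, hu⟩ := hu
    refine ⟨↑u⁻¹, ?_⟩
    rw [Ideal.mem_bot, sub_eq_zero, mul_assoc, ← mul_add_one, ← hu, Units.inv_mul]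
  -- jacobson (ker φ) = jacobson ⊥
  have hjac : (RingHom.ker φ).jacobson = Ideal.jacobson (⊥ : Ideal R) := by
    refine le_antisymm ?_ (Ideal.jacobson_mono bot_le)
    unfold Ideal.jacobson
    refine sInf_le_sInf fun J hJ => ?_
    exact ⟨le_trans hker (sInf_le (show _ ∈ _ from ⟨bot_le, hJ.2⟩)), hJ.2⟩
  have hmapker : Ideal.map φ (RingHom.ker φ) = ⊥ := by
    rw [eq_bot_iff, Ideal.map_le_iff_le_comap]
    intro x hx
    exact hx
  have hmap : Ideal.map φ (Ideal.jacobson (⊥ : Ideal R)) = Ideal.jacobson (⊥ : Ideal S) := by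
    rw [← hjac, Ideal.map_jacobson_of_surjective hsurj le_rfl, hmapker]
  constructor
  · ext y
    constructor
    · rintro ⟨x, hx, rfl⟩
      rw [← hmap]
      exact Ideal.mem_map_of_mem φ hx
    · intro hy
      rw [← hmap] at hy
      obtain ⟨x, hx, rfl⟩ := Ideal.mem_map_iff_of_surjective φ hsurj |>.mp hy
      exact ⟨x, hx, rfl⟩
  · intro n _ M hM
    obtain ⟨u, hu⟩ := hM
    -- lift the inverse entrywise
    have hsurjM : Function.Surjective
        (φ.mapMatrix : Matrix (Fin n) (Fin n) R →+* Matrix (Fin n) (Fin n) S) := by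
      intro W
      refine ⟨Matrix.of fun i j => (hsurj (W i j)).choose, ?_⟩
      ext i j
      exact (hsurj (W i j)).choose_spec
    obtain ⟨N, hN⟩ := hsurjM (u⁻¹).val
    -- key: if φ.mapMatrix X = 1 then X is a unit
    have key : ∀ X : Matrix (Fin n) (Fin n) R,
        (φ.mapMatrix : Matrix (Fin n) (Fin n) R →+* Matrix (Fin n) (Fin n) S) X = 1 →
        IsUnit X := by
      intro X hX
      apply aux_isUnit_of_sub_one_mem_jacobson_bot
      have hmem : X - 1 ∈ (Ideal.jacobson (⊥ : Ideal R)).matrix (Fin n) := by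
        rw [Ideal.mem_matrix]
        intro i j
        apply hker
        show φ ((X - 1) i j) = 0
        have : ∀ i j, φ (X i j) = (1 : Matrix (Fin n) (Fin n) S) i j := fun i j => by
          rw [← hX]; rfl
        by_cases h : i = j
        · subst h
          simp [Matrix.sub_apply, this i i, Matrix.one_apply_eq]
        · simp [Matrix.sub_apply, this i j, Matrix.one_apply_ne h]
      have := Ideal.matrix_jacobson_le (⊥ : Ideal R) hmem
      rwa [Ideal.matrix_bot] at this
    have h1 : IsUnit (M * N) := by
      apply key
      rw [map_mul, ← hu, hN, Units.mul_inv]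
    have h2 : IsUnit (N * M) := by
      apply key
      rw [map_mul, ← hu, hN, Units.inv_mul]
    obtain ⟨v, hv⟩ := h1
    obtain ⟨w, hw⟩ := h2
    have hr : M * (N * (v⁻¹).val) = 1 := by
      rw [← mul_assoc, ← hv, Units.mul_inv]
    have hl : ((w⁻¹).val * N) * M = 1 := by
      rw [mul_assoc, ← hw, Units.inv_mul]
    have heq : N * (v⁻¹).val = (w⁻¹).val * N := by
      calc N * (v⁻¹).val = (((w⁻¹).val * N) * M) * (N * (v⁻¹).val) := by rw [hl, one_mul]
        _ = ((w⁻¹).val * N) * (M * (N * (v⁻¹).val)) := by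
              simp only [mul_assoc]
        _ = (w⁻¹).val * N := by rw [hr, mul_one]
    exact ⟨⟨M, N * (v⁻¹).val, hr, heq ▸ hl⟩, rfl⟩
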